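/- For all complex numbers α, β with V₁V₂V₃ ≠ 0, setting ξ₁ = F/(4(V₂V₃)²), ξ₂ = F/(4(V₁V₃)²), ξ₃ = F/(4(V₁V₂)²), one has ξ₁ + ξ₂ + ξ₃ = 0, and if moreover E ≠ 0 and J₀ ≠ 1 then ξ₁ξ₂ξ₃ = (27/4)·J₀/(J₀−1) and ξ₁ξ₂ξ₃ = ξ_k³/(ξ_k+1) for each k (provided ξ_k ≠ −1). -/

import Mathlib

theorem xi_relations (α β : ℂ)
    (V₁ V₂ V₃ E F J₀ ξ₁ ξ₂ ξ₃ : ℂ)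
    (hV₁ : V₁ = 2 * Complex.I * α * β)
    (hV₂ : V₂ = Complex.I * (α ^ 2 - β ^ 2))
    (hV₃ : V₃ = α ^ 2 + β ^ 2)
    (hE : E = 8 * (α ^ 12 - 33 * α ^ 8 * β ^ 4 - 33 * α ^ 4 * β ^ 8 + β ^ 12))
    (hF : F = 4 * (α ^ 8 + 14 * α ^ 4 * β ^ 4 + β ^ 8))
    (hJ : J₀ = F ^ 3 / E ^ 2)
    (hV : V₁ * V₂ * V₃ ≠ 0)
    (hξ₁ : ξ₁ = F / (4 * (V₂ * V₃) ^ 2))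
    (hξ₂ : ξ₂ = F / (4 * (V₁ * V₃) ^ 2))
    (hξ₃ : ξ₃ = F / (4 * (V₁ * V₂) ^ 2)) :
    ξ₁ + ξ₂ + ξ₃ = 0 ∧
    (E ≠ 0 → J₀ ≠ 1 →
      (ξ₁ * ξ₂ * ξ₃ = 27 / 4 * (J₀ / (J₀ - 1)) ∧
       (∀ ξ ∈ ({ξ₁, ξ₂, ξ₃} : Set ℂ), ξ ≠ -1 →
          ξ₁ * ξ₂ * ξ₃ = ξ ^ 3 / (ξ + 1)))) := by
  have h4 : Complex.I ^ 4 = 1 := Complex.I_pow_four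
  have h6 : Complex.I ^ 6 = -1 := by
    rw [show (6 : ℕ) = 4 + 2 by norm_num, pow_add, h4, Complex.I_sq]; ring
  have h8 : Complex.I ^ 8 = 1 := by
    rw [show (8 : ℕ) = 4 + 4 by norm_num, pow_add, h4]; ring
  have h1 : V₁ ≠ 0 := left_ne_zero_of_mul (left_ne_zero_of_mul hV)
  have h2 : V₂ ≠ 0 := right_ne_zero_of_mul (left_ne_zero_of_mul hV)
  have h3 : V₃ ≠ 0 := right_ne_zero_of_mul hV
  have hfour : (4 : ℂ) ≠ 0 := by norm_num
  have hd1 : (4 * (V₂ * V₃) ^ 2 : ℂ) ≠ 0 :=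
    mul_ne_zero hfour (pow_ne_zero 2 (mul_ne_zero h2 h3))
  have hd2 : (4 * (V₁ * V₃) ^ 2 : ℂ) ≠ 0 :=
    mul_ne_zero hfour (pow_ne_zero 2 (mul_ne_zero h1 h3))
  have hd3 : (4 * (V₁ * V₂) ^ 2 : ℂ) ≠ 0 :=
    mul_ne_zero hfour (pow_ne_zero 2 (mul_ne_zero h1 h2))
  have hD : (4 * (V₁ * V₂ * V₃) ^ 2 : ℂ) ≠ 0 :=
    mul_ne_zero hfour (pow_ne_zero 2 hV)
  have hs : V₁ ^ 2 + V₂ ^ 2 + V₃ ^ 2 = 0 := by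
    rw [hV₁, hV₂, hV₃]; ring_nf; simp only [Complex.I_sq, h4, h6, h8]; ring
  have hA1 : F + 4 * (V₂ * V₃) ^ 2 = 4 * V₁ ^ 4 := by
    rw [hV₁, hV₂, hV₃, hF]; ring_nf; simp only [Complex.I_sq, h4, h6, h8]; ring
  have hA2 : F + 4 * (V₁ * V₃) ^ 2 = 4 * V₂ ^ 4 := by
    rw [hV₁, hV₂, hV₃, hF]; ring_nf; simp only [Complex.I_sq, h4, h6, h8]; ring
  have hA3 : F + 4 * (V₁ * V₂) ^ 2 = 4 * V₃ ^ 4 := by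
    rw [hV₁, hV₂, hV₃, hF]; ring_nf; simp only [Complex.I_sq, h4, h6, h8]; ring
  have hFE : F ^ 3 - E ^ 2 = 432 * (V₁ * V₂ * V₃) ^ 4 := by
    rw [hV₁, hV₂, hV₃, hF, hE]; ring_nf; simp only [Complex.I_sq, h4, h6, h8]; ring
  constructor
  · have k1 : ξ₁ = F * V₁ ^ 2 / (4 * (V₁ * V₂ * V₃) ^ 2) := by
      rw [hξ₁, div_eq_div_iff hd1 hD]; ring
    have k2 : ξ₂ = F * V₂ ^ 2 / (4 * (V₁ * V₂ * V₃) ^ 2) := by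
      rw [hξ₂, div_eq_div_iff hd2 hD]; ring
    have k3 : ξ₃ = F * V₃ ^ 2 / (4 * (V₁ * V₂ * V₃) ^ 2) := by
      rw [hξ₃, div_eq_div_iff hd3 hD]; ring
    rw [k1, k2, k3, ← add_div, ← add_div, div_eq_zero_iff]
    left
    linear_combination F * hs
  · intro hE0 hJ1
    have hFE0 : F ^ 3 - E ^ 2 ≠ 0 := by
      intro h
      apply hJ1
      rw [hJ, div_eq_one_iff_eq (pow_ne_zero 2 hE0)]
      linear_combination h
    have hquot : J₀ / (J₀ - 1) = F ^ 3 / (F ^ 3 - E ^ 2) := by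
      have hd : J₀ - 1 ≠ 0 := sub_ne_zero.mpr hJ1
      rw [hJ] at hd ⊢
      field_simp at hd ⊢
    have h432 : (432 * (V₁ * V₂ * V₃) ^ 4 : ℂ) ≠ 0 :=
      mul_ne_zero (by norm_num) (pow_ne_zero 4 hV)
    have hLd : (4 * (V₂ * V₃) ^ 2 * (4 * (V₁ * V₃) ^ 2) * (4 * (V₁ * V₂) ^ 2) : ℂ) ≠ 0 :=
      mul_ne_zero (mul_ne_zero hd1 hd2) hd3
    have hP : ξ₁ * ξ₂ * ξ₃ =
        F * F * F / (4 * (V₂ * V₃) ^ 2 * (4 * (V₁ * V₃) ^ 2) * (4 * (V₁ * V₂) ^ 2)) := by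
      rw [hξ₁, hξ₂, hξ₃, div_mul_div_comm, div_mul_div_comm]
    have hprod : ξ₁ * ξ₂ * ξ₃ = 27 / 4 * (J₀ / (J₀ - 1)) := by
      rw [hquot, hFE, hP, div_mul_div_comm,
        div_eq_div_iff hLd (mul_ne_zero hfour h432)]
      ring
    refine ⟨hprod, ?_⟩
    rintro ξ hmem hne
    simp only [Set.mem_insert_iff, Set.mem_singleton_iff] at hmem
    rcases hmem with rfl | rfl | rfl
    · have hplus : ξ + 1 = V₁ ^ 4 / (V₂ * V₃) ^ 2 := by
        rw [hξ₁, div_add' _ _ _ hd1,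
          div_eq_div_iff hd1 (pow_ne_zero 2 (mul_ne_zero h2 h3))]
        linear_combination (V₂ * V₃) ^ 2 * hA1
      rw [hplus, hξ₁, hξ₂, hξ₃, div_mul_div_comm, div_mul_div_comm,
        div_div_eq_mul_div, div_pow, div_mul_eq_mul_div, div_div,
        div_eq_div_iff hLd
          (mul_ne_zero (pow_ne_zero 3 hd1) (pow_ne_zero 4 h1))]
      ring
    · have hplus : ξ + 1 = V₂ ^ 4 / (V₁ * V₃) ^ 2 := by
        rw [hξ₂, div_add' _ _ _ hd2,
          div_eq_div_iff hd2 (pow_ne_zero 2 (mul_ne_zero h1 h3))]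
        linear_combination (V₁ * V₃) ^ 2 * hA2
      rw [hplus, hξ₁, hξ₂, hξ₃, div_mul_div_comm, div_mul_div_comm,
        div_div_eq_mul_div, div_pow, div_mul_eq_mul_div, div_div,
        div_eq_div_iff hLd
          (mul_ne_zero (pow_ne_zero 3 hd2) (pow_ne_zero 4 h2))]
      ring
    · have hplus : ξ + 1 = V₃ ^ 4 / (V₁ * V₂) ^ 2 := by
        rw [hξ₃, div_add' _ _ _ hd3,
          div_eq_div_iff hd3 (pow_ne_zero 2 (mul_ne_zero h1 h2))]
        linear_combination (V₁ * V₂) ^ 2 * hA3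
      rw [hplus, hξ₁, hξ₂, hξ₃, div_mul_div_comm, div_mul_div_comm,
        div_div_eq_mul_div, div_pow, div_mul_eq_mul_div, div_div,
        div_eq_div_iff hLd
          (mul_ne_zero (pow_ne_zero 3 hd3) (pow_ne_zero 4 h3))]
      ring
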